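/- arXiv:1803.10627 — 5 statements merged into one kernel-verified Lean document; each statement's English description precedes it below -/
import Mathlib

section
/- A square matrix over a ring that is hollow (contains a k × l block of zeros with k + l > n) is not full, i.e., it factors as a product of an n × m and an m × n matrix with m < n. -/
/-- A hollow square matrix over a ring is not full: it factors through a
smaller rectangular shape. -/
theorem hollow_not_full {R : Type*} [Ring R] {n : ℕ}
    (A : Matrix (Fin n) (Fin n) R)
    (I J : Finset (Fin n)) (hcard : n < I.card + J.card)
    (hzero : ∀ i ∈ I, ∀ j ∈ J, A i j = 0) :
    ∃ m : ℕ, m < n ∧ ∃ (T : Matrix (Fin n) (Fin m) R) (U : Matrix (Fin m) (Fin n) R),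
      A = T * U := by
  classical
  set a := (Iᶜ : Finset (Fin n)).card with ha
  set b := (Jᶜ : Finset (Fin n)).card with hb
  have hIc : a = n - I.card := by simp [ha, Finset.card_compl]
  have hJc : b = n - J.card := by simp [hb, Finset.card_compl]
  have hI : I.card ≤ n := by simpa using Finset.card_le_univ I
  have hJ : J.card ≤ n := by simpa using Finset.card_le_univ J
  refine ⟨b + a, by omega, ?_⟩
  let e : Fin b ⊕ Fin a ≃ Fin (b + a) := finSumFinEquiv
  let fI : Fin a ≃ ↥(Iᶜ : Finset (Fin n)) := (Iᶜ : Finset (Fin n)).equivFin.symm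
  let gJ : Fin b ≃ ↥(Jᶜ : Finset (Fin n)) := (Jᶜ : Finset (Fin n)).equivFin.symm
  refine ⟨fun i k => Sum.elim (fun kb => A i (gJ kb)) (fun ka => if (fI ka : Fin n) = i then 1 else 0) (e.symm k),
         fun k j => Sum.elim (fun kb => if (gJ kb : Fin n) = j then 1 else 0) (fun ka => if j ∈ J then A (fI ka) j else 0) (e.symm k), ?_⟩
  ext i j
  erw [Matrix.mul_apply]
  rw [← e.sum_comp]
  simp only [Equiv.symm_apply_apply]
  rw [Fintype.sum_sum_type]
  simp only [Sum.elim_inl, Sum.elim_inr]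
  have h1 : ∑ kb : Fin b, A i (gJ kb) * (if (gJ kb : Fin n) = j then 1 else 0)
      = if j ∈ Jᶜ then A i j else 0 := by
    rw [Fintype.sum_equiv gJ _ (fun x : ↥(Jᶜ : Finset (Fin n)) => A i x * (if (x : Fin n) = j then 1 else 0)) (fun _ => rfl)]
    rw [Finset.sum_coe_sort (Jᶜ) (fun x => A i x * (if x = j then 1 else 0))]
    simp only [mul_ite, mul_one, mul_zero]
    exact Finset.sum_ite_eq' (Jᶜ) j (fun x => A i x)
  have h2 : ∑ ka : Fin a, (if (fI ka : Fin n) = i then 1 else 0) * (if j ∈ J then A (fI ka) j else 0)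
      = if i ∈ Iᶜ then (if j ∈ J then A i j else 0) else 0 := by
    rw [Fintype.sum_equiv fI _ (fun x : ↥(Iᶜ : Finset (Fin n)) => (if (x : Fin n) = i then 1 else 0) * (if j ∈ J then A x j else 0)) (fun _ => rfl)]
    rw [Finset.sum_coe_sort (Iᶜ) (fun x => (if x = i then 1 else 0) * (if j ∈ J then A x j else 0))]
    simp only [ite_mul, one_mul, zero_mul]
    exact Finset.sum_ite_eq' (Iᶜ) i (fun x => if j ∈ J then A x j else 0)
  rw [h1, h2]
  by_cases hjJ : j ∈ J
  · by_cases hiI : i ∈ I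
    · simp [hjJ, hiI, hzero i hiI j hjJ]
    · simp [hjJ, hiI]
  · simp [hjJ]
end

section
/- Given linear representations (u_f, A_f, v_f) of f and (u_g, A_g, v_g) of g over a skew field, the block matrix [[A_f, -v_f u_g],[0, A_g]] is invertible and ([u_f, 0], [[A_f, -v_f u_g],[0, A_g]], [0; v_g]) is a linear representation of the product f·g. -/
open Matrix


theorem aux_blocks_mul_inv {m n α : Type*} [Fintype m] [Fintype n] [DecidableEq m]
    [DecidableEq n] [Ring α] (A : Matrix m m α) (Bb : Matrix m n α) (D : Matrix n n α)
    [Invertible A] [Invertible D] :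
    Matrix.fromBlocks A Bb 0 D *
      Matrix.fromBlocks (⅟A) (-(⅟A * Bb * ⅟D)) 0 (⅟D) = 1 := by
  simp only [Matrix.fromBlocks_multiply, Matrix.mul_zero, Matrix.zero_mul, zero_add,
    add_zero, Matrix.mul_neg, ← Matrix.mul_assoc, mul_invOf_self, Matrix.one_mul, neg_zero,
    neg_add_cancel, Matrix.fromBlocks_one]

theorem aux_inv_mul_blocks {m n α : Type*} [Fintype m] [Fintype n] [DecidableEq m]
    [DecidableEq n] [Ring α] (A : Matrix m m α) (Bb : Matrix m n α) (D : Matrix n n α)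
    [Invertible A] [Invertible D] :
    Matrix.fromBlocks (⅟A) (-(⅟A * Bb * ⅟D)) 0 (⅟D) *
      Matrix.fromBlocks A Bb 0 D = 1 := by
  simp only [Matrix.fromBlocks_multiply, Matrix.mul_zero, Matrix.zero_mul, zero_add,
    add_zero, Matrix.neg_mul, invOf_mul_self, Matrix.invOf_mul_cancel_right,
    add_neg_cancel, Matrix.fromBlocks_one]

/-- The block construction for the product of two elements given by linear
representations: `([u_f, 0], [[A_f, -v_f u_g],[0, A_g]], [0; v_g])`
is a linear representation of `f·g`. -/
theorem product_representation {K F : Type*} [Field K] [DivisionRing F] [Algebra K F]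
    {nf ng : ℕ}
    (uf : Matrix (Fin 1) (Fin nf) K) (vf : Matrix (Fin nf) (Fin 1) K)
    (Af : Matrix (Fin nf) (Fin nf) F) (hAf : IsUnit Af)
    (ug : Matrix (Fin 1) (Fin ng) K) (vg : Matrix (Fin ng) (Fin 1) K)
    (Ag : Matrix (Fin ng) (Fin ng) F) (hAg : IsUnit Ag)
    (f g : F)
    (hf : ((uf.map ⇑(algebraMap K F)) * Ring.inverse Af * (vf.map ⇑(algebraMap K F))) 0 0 = f)
    (hg : ((ug.map ⇑(algebraMap K F)) * Ring.inverse Ag * (vg.map ⇑(algebraMap K F))) 0 0 = g) :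
    let B : Matrix (Fin nf ⊕ Fin ng) (Fin nf ⊕ Fin ng) F :=
      Matrix.fromBlocks Af
        (-((vf.map ⇑(algebraMap K F)) * (ug.map ⇑(algebraMap K F)))) 0 Ag
    let u : Matrix (Fin 1) (Fin nf ⊕ Fin ng) F :=
      Matrix.of fun i j => Sum.elim (fun a => (uf.map ⇑(algebraMap K F)) i a) (fun _ => 0) j
    let w : Matrix (Fin nf ⊕ Fin ng) (Fin 1) F :=
      Matrix.of fun i j =>
        Sum.elim (fun _ => 0) (fun b => (vg.map ⇑(algebraMap K F)) b j) i
    IsUnit B ∧ (u * Ring.inverse B * w) 0 0 = f * g := by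
  intro B u w
  set uf' := uf.map ⇑(algebraMap K F) with huf'
  set vf' := vf.map ⇑(algebraMap K F) with hvf'
  set ug' := ug.map ⇑(algebraMap K F) with hug'
  set vg' := vg.map ⇑(algebraMap K F) with hvg'
  haveI := hAf.invertible
  haveI := hAg.invertible
  set Binv : Matrix (Fin nf ⊕ Fin ng) (Fin nf ⊕ Fin ng) F :=
    Matrix.fromBlocks (⅟Af) (⅟Af * (vf' * ug') * ⅟Ag) 0 (⅟Ag) with hBinvdef
  have hneg : -(⅟Af * (-(vf' * ug')) * ⅟Ag) = ⅟Af * (vf' * ug') * ⅟Ag := by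
    simp [Matrix.mul_neg, Matrix.neg_mul]
  have h1 : B * Binv = 1 := by
    rw [hBinvdef, ← hneg]; exact aux_blocks_mul_inv Af (-(vf' * ug')) Ag
  have h2 : Binv * B = 1 := by
    rw [hBinvdef, ← hneg]; exact aux_inv_mul_blocks Af (-(vf' * ug')) Ag
  have hB : IsUnit B := ⟨⟨B, Binv, h1, h2⟩, rfl⟩
  refine ⟨hB, ?_⟩
  have hBinv : Ring.inverse B = Binv := Ring.inverse_unit ⟨B, Binv, h1, h2⟩
  have key : (u * Ring.inverse B * w) 0 0
      = (uf' * (⅟Af * (vf' * ug') * ⅟Ag) * vg') 0 0 := by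
    rw [hBinv, hBinvdef]
    simp only [u, w, Matrix.mul_apply, Fintype.sum_sum_type, Matrix.of_apply,
      Sum.elim_inl, Sum.elim_inr, Matrix.fromBlocks_apply₁₁, Matrix.fromBlocks_apply₁₂,
      Matrix.fromBlocks_apply₂₁, Matrix.fromBlocks_apply₂₂, zero_mul, mul_zero,
      Finset.sum_const_zero, add_zero, zero_add]
    rfl
  rw [key, ← hf, ← hg, Ring.inverse_invertible, Ring.inverse_invertible]
  have assoc : uf' * (⅟Af * (vf' * ug') * ⅟Ag) * vg'
      = (uf' * ⅟Af * vf') * (ug' * ⅟Ag * vg') := by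
    simp only [Matrix.mul_assoc]
  rw [assoc, Matrix.mul_apply, Fin.sum_univ_one]
end

section
/- Given a linear representation (u_f, A_f, v_f) of a nonzero element f of a skew field, the block matrix [[-v_f, A_f],[0, u_f]] is invertible and ([1, 0,…,0], [[-v_f, A_f],[0, u_f]], [0,…,0, 1]ᵀ) is a linear representation of f⁻¹. -/
open Matrix

/-- The block construction for the inverse of a nonzero element given by a
linear representation: `([1,0,…,0], [[-v_f, A_f],[0, u_f]], [0,…,0,1]ᵀ)` is a
linear representation of `f⁻¹`.  The column index `Sum.inr _` corresponds to
the first column `[-v_f; 0]` and `Sum.inl k` to the column of `[A_f; u_f]`. -/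
theorem inverse_representation {K F : Type*} [Field K] [DivisionRing F] [Algebra K F]
    {n : ℕ}
    (uf : Matrix (Fin 1) (Fin n) K) (vf : Matrix (Fin n) (Fin 1) K)
    (Af : Matrix (Fin n) (Fin n) F) (hAf : IsUnit Af)
    (f : F) (hf0 : f ≠ 0)
    (hf : ((uf.map ⇑(algebraMap K F)) * Ring.inverse Af * (vf.map ⇑(algebraMap K F))) 0 0 = f) :
    let B : Matrix (Fin n ⊕ Fin 1) (Fin n ⊕ Fin 1) F :=
      (Matrix.fromBlocks (-(vf.map ⇑(algebraMap K F))) Af 0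
        (uf.map ⇑(algebraMap K F))).submatrix id Sum.swap
    let u : Matrix (Fin 1) (Fin n ⊕ Fin 1) F :=
      Matrix.of fun _ j => Sum.elim (fun _ => (0 : F)) (fun _ => (1 : F)) j
    let w : Matrix (Fin n ⊕ Fin 1) (Fin 1) F :=
      Matrix.of fun i _ => Sum.elim (fun _ => (0 : F)) (fun _ => (1 : F)) i
    IsUnit B ∧ (u * Ring.inverse B * w) 0 0 = f⁻¹ := by
  intro B u w
  have hB : B = Matrix.fromBlocks Af (-(vf.map ⇑(algebraMap K F)))
      (uf.map ⇑(algebraMap K F)) 0 := by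
    show (Matrix.fromBlocks (-(vf.map ⇑(algebraMap K F))) Af 0
        (uf.map ⇑(algebraMap K F))).submatrix id Sum.swap = _
    rw [Matrix.fromBlocks_submatrix_sum_swap_right, Matrix.submatrix_id_id]
  set v' : Matrix (Fin n) (Fin 1) F := vf.map ⇑(algebraMap K F) with hv'
  set u' : Matrix (Fin 1) (Fin n) F := uf.map ⇑(algebraMap K F) with hu'
  set Ai : Matrix (Fin n) (Fin n) F := Ring.inverse Af with hAi
  have hA1 : Af * Ai = 1 := Ring.mul_inverse_cancel _ hAf
  have hA2 : Ai * Af = 1 := Ring.inverse_mul_cancel _ hAf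
  -- the Schur complement (a 1×1 matrix) and its inverse
  set S : Matrix (Fin 1) (Fin 1) F := u' * Ai * v' with hS
  set s : Matrix (Fin 1) (Fin 1) F := Matrix.of (fun _ _ => f⁻¹) with hs
  have hSentry : ∀ i j, S i j = f := by
    intro i j
    have hj : j = 0 := Subsingleton.elim _ _
    have hi : i = 0 := Subsingleton.elim _ _
    subst hj; subst hi
    exact hf
  have hS1 : S * s = 1 := by
    ext i j
    have hi : i = 0 := Subsingleton.elim _ _
    have hj : j = 0 := Subsingleton.elim _ _
    subst hi; subst hj
    simp [Matrix.mul_apply, hs, hSentry, mul_inv_cancel₀ hf0, Matrix.one_apply]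
  have hS2 : s * S = 1 := by
    ext i j
    have hi : i = 0 := Subsingleton.elim _ _
    have hj : j = 0 := Subsingleton.elim _ _
    subst hi; subst hj
    simp [Matrix.mul_apply, hs, hSentry, inv_mul_cancel₀ hf0, Matrix.one_apply]
  set P : Matrix (Fin 1) (Fin n) F := u' * Ai with hP
  set Q : Matrix (Fin n) (Fin 1) F := Ai * v' with hQ
  set C : Matrix (Fin n ⊕ Fin 1) (Fin n ⊕ Fin 1) F :=
    Matrix.fromBlocks (Ai - Q * s * P) (Q * s) (-(s * P)) s with hC
  have hPA : P * Af = u' := by rw [hP, Matrix.mul_assoc, hA2, Matrix.mul_one]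
  have hAQ : Af * Q = v' := by rw [hQ, ← Matrix.mul_assoc, hA1, Matrix.one_mul]
  have huQ : u' * Q = S := by rw [hQ, hS, Matrix.mul_assoc]
  have hPv : P * v' = S := hS.symm
  have e11 : Af * (Ai - Q * s * P) + (-v') * (-(s * P)) = 1 := by
    rw [Matrix.mul_sub, hA1, Matrix.neg_mul, Matrix.mul_neg, neg_neg,
      ← Matrix.mul_assoc Af (Q * s) P, ← Matrix.mul_assoc Af Q s, hAQ,
      ← Matrix.mul_assoc v' s P]
    abel
  have e12 : Af * (Q * s) + (-v') * s = 0 := by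
    rw [← Matrix.mul_assoc, hAQ, Matrix.neg_mul]
    abel
  have e21 : u' * (Ai - Q * s * P) + (0 : Matrix (Fin 1) (Fin 1) F) * (-(s * P)) = 0 := by
    rw [Matrix.zero_mul, add_zero, Matrix.mul_sub,
      ← Matrix.mul_assoc u' (Q * s) P, ← Matrix.mul_assoc u' Q s, huQ, hS1,
      Matrix.one_mul, hP, sub_self]
  have e22 : u' * (Q * s) + (0 : Matrix (Fin 1) (Fin 1) F) * s = 1 := by
    rw [Matrix.zero_mul, add_zero, ← Matrix.mul_assoc, huQ, hS1]
  have f11 : (Ai - Q * s * P) * Af + (Q * s) * u' = 1 := by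
    rw [Matrix.sub_mul, hA2, Matrix.mul_assoc (Q * s) P Af, hPA]
    abel
  have f12 : (Ai - Q * s * P) * (-v') + (Q * s) * (0 : Matrix (Fin 1) (Fin 1) F) = 0 := by
    rw [Matrix.mul_zero, add_zero, Matrix.mul_neg, Matrix.sub_mul,
      Matrix.mul_assoc (Q * s) P v', hPv, Matrix.mul_assoc Q s S, hS2,
      Matrix.mul_one, ← hQ, sub_self, neg_zero]
  have f21 : (-(s * P)) * Af + s * u' = 0 := by
    rw [Matrix.neg_mul, Matrix.mul_assoc s P Af, hPA]
    abel
  have f22 : (-(s * P)) * (-v') + s * (0 : Matrix (Fin 1) (Fin 1) F) = 1 := by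
    rw [Matrix.mul_zero, add_zero, Matrix.neg_mul, Matrix.mul_neg, neg_neg,
      Matrix.mul_assoc s P v', hPv, hS2]
  have hBC : B * C = 1 := by
    rw [hB, hC, Matrix.fromBlocks_multiply, e11, e12, e21, e22,
      Matrix.fromBlocks_one]
  have hCB : C * B = 1 := by
    rw [hB, hC, Matrix.fromBlocks_multiply, f11, f12, f21, f22,
      Matrix.fromBlocks_one]
  refine ⟨⟨⟨B, C, hBC, hCB⟩, rfl⟩, ?_⟩
  have hRinv : Ring.inverse B = C :=
    Ring.inverse_unit (⟨B, C, hBC, hCB⟩ : (Matrix (Fin n ⊕ Fin 1) (Fin n ⊕ Fin 1) F)ˣ)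
  rw [hRinv]
  have hentry : (u * C * w) 0 0 = C (Sum.inr 0) (Sum.inr 0) := by
    simp [Matrix.mul_apply, u, w, Fintype.sum_sum_type]
  rw [hentry, hC]
  simp [hs]
end

section
/- If f is an element of the free field given by a minimal linear representation of dimension n whose system matrix can be brought (by scalar transformations) to a form with first column e₁ = [1,0,…,0]ᵀ and last row e_nᵀ (type (1,1)), then f⁻¹ has a linear representation of dimension n − 1; in particular rank(f⁻¹) = rank(f) − 1. -/
open Matrix

/-- The set of dimensions of linear representations of `g`: `(u, A, v)` with
`u, v` scalar, `A` full and linear over the free algebra, invertible over `F`,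
and `u A⁻¹ v = g`. -/
def repDims {K F X : Type*} [Field K] [DivisionRing F] [Algebra K F]
    (φ : FreeAlgebra K X →ₐ[K] F) (g : F) : Set ℕ :=
  {d | ∃ (u : Matrix (Fin 1) (Fin d) K) (v : Matrix (Fin d) (Fin 1) K)
      (A : Matrix (Fin d) (Fin d) (FreeAlgebra K X)),
    (∀ i j, A i j ∈ Submodule.span K
      ({1} ∪ Set.range (FreeAlgebra.ι K) : Set (FreeAlgebra K X))) ∧
    (∀ l < d, ∀ (T : Matrix (Fin d) (Fin l) (FreeAlgebra K X))
      (U : Matrix (Fin l) (Fin d) (FreeAlgebra K X)), A ≠ T * U) ∧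
    IsUnit (A.map ⇑φ) ∧
    ((u.map ⇑(algebraMap K F)) * Ring.inverse (A.map ⇑φ) *
      (v.map ⇑(algebraMap K F))) 0 0 = g}

/-- The rank of `g`: the minimal dimension of a linear representation. -/
noncomputable def freeRank {K F X : Type*} [Field K] [DivisionRing F] [Algebra K F]
    (φ : FreeAlgebra K X →ₐ[K] F) (g : F) : ℕ :=
  sInf (repDims φ g)

-- auxiliary private lemmas

section Aux
variable {F : Type*} [DivisionRing F]

private lemma exists_left_inv_of_vecMul_surj {d : ℕ} (M : Matrix (Fin d) (Fin d) F)
    (h : Function.Surjective fun t => Matrix.vecMul t M) :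
    ∃ B : Matrix (Fin d) (Fin d) F, B * M = 1 := by
  choose r hr using h
  refine ⟨Matrix.of fun i => r (Pi.single i 1), ?_⟩
  ext i j
  have := congrFun (hr (Pi.single i 1)) j
  simpa [Matrix.mul_apply, Matrix.vecMul, dotProduct, Matrix.one_apply,
    Pi.single_apply, eq_comm] using this

private lemma isUnit_of_vecMul_inj {d : ℕ} (M : Matrix (Fin d) (Fin d) F)
    (h : ∀ t : Fin d → F, Matrix.vecMul t M = 0 → t = 0) : IsUnit M := by
  have hinj : Function.Injective M.vecMulLinear := by
    rw [← LinearMap.ker_eq_bot]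
    exact LinearMap.ker_eq_bot'.mpr fun t ht => h t ht
  have hsurj : Function.Surjective M.vecMulLinear :=
    LinearMap.injective_iff_surjective.mp hinj
  obtain ⟨B, hBM⟩ := exists_left_inv_of_vecMul_surj M hsurj
  -- now get a left inverse for B
  have hBinj : ∀ t : Fin d → F, Matrix.vecMul t B = 0 → t = 0 := by
    intro t ht
    have : Matrix.vecMul (Matrix.vecMul t B) M = t := by
      rw [Matrix.vecMul_vecMul, hBM, Matrix.vecMul_one]
    rw [ht, Matrix.zero_vecMul] at this
    exact this.symm
  have hBinj' : Function.Injective B.vecMulLinear := by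
    rw [← LinearMap.ker_eq_bot]
    exact LinearMap.ker_eq_bot'.mpr fun t ht => hBinj t ht
  obtain ⟨C, hCB⟩ := exists_left_inv_of_vecMul_surj B
    (LinearMap.injective_iff_surjective.mp hBinj')
  have hCM : C = M := by
    have : C * (B * M) = C := by rw [hBM, mul_one]
    rw [← mul_assoc, hCB, one_mul] at this
    exact this.symm
  exact ⟨⟨M, B, by rw [← hCM]; exact hCB, hBM⟩, rfl⟩

private lemma not_isUnit_of_factor {d l : ℕ} (hl : l < d)
    (T : Matrix (Fin d) (Fin l) F) (U : Matrix (Fin l) (Fin d) F) :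
    ¬ IsUnit (T * U) := by
  intro hu
  have hni : ¬ Function.Injective T.vecMulLinear := by
    intro hi
    have := LinearMap.finrank_le_finrank_of_injective hi
    rw [Module.finrank_pi, Module.finrank_pi] at this
    simp at this
    omega
  rw [Function.not_injective_iff] at hni
  obtain ⟨a, b, hab, hne⟩ := hni
  have hsub : Matrix.vecMul (a - b) T = 0 := by
    rw [Matrix.sub_vecMul]
    simp only [Matrix.vecMulLinear_apply] at hab
    rw [hab, sub_self]
  have h1 : Matrix.vecMul (a - b) (T * U) = 0 := by
    rw [← Matrix.vecMul_vecMul, hsub, Matrix.zero_vecMul]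
  have : a - b = 0 := by
    have h2 := congrArg (fun x => Matrix.vecMul x (Ring.inverse (T * U))) h1
    simp only [Matrix.vecMul_vecMul, Ring.mul_inverse_cancel _ hu, Matrix.vecMul_one,
      Matrix.zero_vecMul] at h2
    exact h2
  exact hne (sub_eq_zero.mp this)

private lemma ring_inverse_mul {R : Type*} [Ring R] {a b : R} (ha : IsUnit a) (hb : IsUnit b) :
    Ring.inverse (a * b) = Ring.inverse b * Ring.inverse a := by
  obtain ⟨ua, rfl⟩ := ha
  obtain ⟨ub, rfl⟩ := hb
  rw [← Units.val_mul, Ring.inverse_unit, Ring.inverse_unit, Ring.inverse_unit, _root_.mul_inv_rev,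
    Units.val_mul]

private lemma ring_inverse_eq {R : Type*} [Ring R] {a b : R} (h1 : a * b = 1) (h2 : b * a = 1) :
    Ring.inverse a = b := by
  have : Ring.inverse ((⟨a, b, h1, h2⟩ : Rˣ) : R) = b := Ring.inverse_unit _
  exact this




private lemma del_first_unit {d : ℕ} (W : Matrix (Fin (d+1)) (Fin (d+1)) F) (hW : IsUnit W)
    (hcol : ∀ i, W i 0 = if i = 0 then 1 else 0) :
    IsUnit (W.submatrix Fin.succ Fin.succ) := by
  apply isUnit_of_vecMul_inj
  intro t ht
  have hvm : Matrix.vecMul (Fin.cons 0 t : Fin (d+1) → F) W = 0 := by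
    ext j
    refine Fin.cases ?_ (fun j' => ?_) j
    · simp [Matrix.vecMul, dotProduct, hcol, mul_ite, Finset.sum_ite_eq']
    · have h1 := congrFun ht j'
      simp only [Matrix.vecMul, dotProduct, Matrix.submatrix_apply, Pi.zero_apply] at h1 ⊢
      rw [Fin.sum_univ_succ]
      simpa using h1
  have h0 : (Fin.cons 0 t : Fin (d+1) → F) = 0 := by
    have h2 := congrArg (fun x => Matrix.vecMul x (Ring.inverse W)) hvm
    simpa [Matrix.vecMul_vecMul, Ring.mul_inverse_cancel _ hW] using h2
  ext i
  have := congrFun h0 i.succ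
  simpa using this

private lemma del_last_unit {d : ℕ} (W : Matrix (Fin (d+1)) (Fin (d+1)) F) (hW : IsUnit W)
    (hrow : ∀ j, W (Fin.last d) j = if j = Fin.last d then 1 else 0) :
    IsUnit (W.submatrix Fin.castSucc Fin.castSucc) := by
  apply isUnit_of_vecMul_inj
  intro t ht
  have hvm : Matrix.vecMul
      (Fin.snoc t (-(∑ i, t i * W i.castSucc (Fin.last d))) : Fin (d+1) → F) W = 0 := by
    ext j
    refine Fin.lastCases ?_ (fun j' => ?_) j
    · simp only [Matrix.vecMul, dotProduct, Pi.zero_apply]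
      rw [Fin.sum_univ_castSucc]
      simp [hrow]
    · have h1 := congrFun ht j'
      simp only [Matrix.vecMul, dotProduct, Matrix.submatrix_apply, Pi.zero_apply] at h1 ⊢
      rw [Fin.sum_univ_castSucc]
      have : W (Fin.last d) j'.castSucc = 0 := by
        rw [hrow]
        simp [(Fin.castSucc_lt_last j').ne]
      simp only [Fin.snoc_castSucc, Fin.snoc_last, this, mul_zero, add_zero]
      exact h1
  have h0 : (Fin.snoc t (-(∑ i, t i * W i.castSucc (Fin.last d))) : Fin (d+1) → F) = 0 := by
    have h2 := congrArg (fun x => Matrix.vecMul x (Ring.inverse W)) hvm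
    simpa [Matrix.vecMul_vecMul, Ring.mul_inverse_cancel _ hW] using h2
  ext i
  have := congrFun h0 i.castSucc
  simpa using this




private lemma del_first_value {d : ℕ} (W : Matrix (Fin (d+1)) (Fin (d+1)) F) (hW : IsUnit W)
    (hcol : ∀ i, W i 0 = if i = 0 then 1 else 0)
    (a b : Fin (d+1) → F) (ha : a 0 = 0) :
    ∑ j, Matrix.vecMul (fun i => a i.succ)
        (Ring.inverse (W.submatrix Fin.succ Fin.succ)) j * b j.succ
      = ∑ j, Matrix.vecMul a (Ring.inverse W) j * b j := by
  have hN := del_first_unit W hW hcol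
  set N := W.submatrix Fin.succ Fin.succ with hNdef
  set s := Matrix.vecMul a (Ring.inverse W) with hs
  have hsW : Matrix.vecMul s W = a := by
    rw [hs, Matrix.vecMul_vecMul, Ring.inverse_mul_cancel _ hW, Matrix.vecMul_one]
  have hs0 : s 0 = 0 := by
    have := congrFun hsW 0
    simp only [Matrix.vecMul, dotProduct, hcol, mul_ite, mul_one, mul_zero,
      Finset.sum_ite_eq', Finset.mem_univ, if_true] at this
    rw [this, ha]
  have hvm : Matrix.vecMul (fun i => s i.succ) N = fun j => a j.succ := by
    ext j
    have h1 := congrFun hsW j.succ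
    simp only [Matrix.vecMul, dotProduct] at h1 ⊢
    rw [Fin.sum_univ_succ, hs0, zero_mul, zero_add] at h1
    simpa [hNdef] using h1
  have hvi : Matrix.vecMul (fun i => a i.succ) (Ring.inverse N) = fun i => s i.succ := by
    have := congrArg (fun x => Matrix.vecMul x (Ring.inverse N)) hvm
    simpa [Matrix.vecMul_vecMul, Ring.mul_inverse_cancel _ hN] using this.symm
  rw [hvi]
  rw [Fin.sum_univ_succ, hs0, zero_mul, zero_add]

private lemma del_last_value {d : ℕ} (W : Matrix (Fin (d+1)) (Fin (d+1)) F) (hW : IsUnit W)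
    (hrow : ∀ j, W (Fin.last d) j = if j = Fin.last d then 1 else 0)
    (a b : Fin (d+1) → F) (hb : b (Fin.last d) = 0) :
    ∑ j, Matrix.vecMul (fun i => a i.castSucc)
        (Ring.inverse (W.submatrix Fin.castSucc Fin.castSucc)) j * b j.castSucc
      = ∑ j, Matrix.vecMul a (Ring.inverse W) j * b j := by
  have hN := del_last_unit W hW hrow
  set N := W.submatrix Fin.castSucc Fin.castSucc with hNdef
  set s := Matrix.vecMul a (Ring.inverse W) with hs
  have hsW : Matrix.vecMul s W = a := by
    rw [hs, Matrix.vecMul_vecMul, Ring.inverse_mul_cancel _ hW, Matrix.vecMul_one]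
  have hvm : Matrix.vecMul (fun i => s i.castSucc) N = fun j => a j.castSucc := by
    ext j
    have h1 := congrFun hsW j.castSucc
    simp only [Matrix.vecMul, dotProduct] at h1 ⊢
    rw [Fin.sum_univ_castSucc] at h1
    have hz : W (Fin.last d) j.castSucc = 0 := by
      rw [hrow]; simp [(Fin.castSucc_lt_last j).ne]
    rw [hz, mul_zero, add_zero] at h1
    simpa [hNdef] using h1
  have hvi : Matrix.vecMul (fun i => a i.castSucc) (Ring.inverse N) = fun i => s i.castSucc := by
    have := congrArg (fun x => Matrix.vecMul x (Ring.inverse N)) hvm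
    simpa [Matrix.vecMul_vecMul, Ring.mul_inverse_cancel _ hN] using this.symm
  rw [hvi]
  rw [Fin.sum_univ_castSucc, hb, mul_zero, add_zero]




private lemma type11_inv {d : ℕ} (W : Matrix (Fin (d+2)) (Fin (d+2)) F) (hW : IsUnit W)
    (hcol : ∀ i, W i 0 = if i = 0 then 1 else 0)
    (hrow : ∀ j, W (Fin.last (d+1)) j = if j = Fin.last (d+1) then 1 else 0)
    (hg : Ring.inverse W 0 (Fin.last (d+1)) ≠ 0) :
    IsUnit (W.submatrix Fin.castSucc Fin.succ) ∧
    Ring.inverse (W.submatrix Fin.castSucc Fin.succ) (Fin.last d) 0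
      = -(Ring.inverse W 0 (Fin.last (d+1)))⁻¹ := by
  set W' := Ring.inverse W with hW'def
  have hW'W : W' * W = 1 := Ring.inverse_mul_cancel _ hW
  have hWW' : W * W' = 1 := Ring.mul_inverse_cancel _ hW
  set g := W' 0 (Fin.last (d+1)) with hgdef
  -- column 0 of W'
  have hW'col : ∀ i, W' i 0 = if i = 0 then 1 else 0 := by
    intro i
    have := congrFun (congrFun hW'W i) 0
    simp only [Matrix.mul_apply, Matrix.one_apply] at this
    simp only [hcol, mul_ite, mul_one, mul_zero, Finset.sum_ite_eq', Finset.mem_univ,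
      if_true] at this
    rw [this]
  set C := W.submatrix Fin.castSucc Fin.succ with hCdef
  -- C is a unit
  have hCunit : IsUnit C := by
    apply isUnit_of_vecMul_inj
    intro t ht
    have hvm : Matrix.vecMul (Fin.snoc t 0 : Fin (d+2) → F) W
        = fun j => if j = 0 then t 0 else 0 := by
      ext j
      refine Fin.cases ?_ (fun j' => ?_) j
      · simp only [Matrix.vecMul, dotProduct, hcol, mul_ite, mul_one, mul_zero,
          Finset.sum_ite_eq', Finset.mem_univ, if_true, if_pos rfl]
        rw [show (0 : Fin (d+2)) = Fin.castSucc 0 by simp, Fin.snoc_castSucc]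
      · have h1 := congrFun ht j'
        simp only [Matrix.vecMul, dotProduct, Matrix.submatrix_apply,
          Pi.zero_apply] at h1 ⊢
        rw [Fin.sum_univ_castSucc]
        simp only [Fin.snoc_castSucc, Fin.snoc_last, zero_mul, add_zero,
          (Fin.succ_ne_zero j').symm, if_neg (Fin.succ_ne_zero j')]
        exact h1
    by_cases ht0 : t 0 = 0
    · have : (Fin.snoc t 0 : Fin (d+2) → F) = 0 := by
        have h2 := congrArg (fun x => Matrix.vecMul x W') hvm
        simp only [Matrix.vecMul_vecMul, hWW', Matrix.vecMul_one] at h2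
        rw [h2]
        ext j
        simp only [Matrix.vecMul, dotProduct, ht0, Pi.zero_apply]
        simp [ite_mul]
      ext i
      have := congrFun this i.castSucc
      simpa using this
    · exfalso
      have h2 := congrArg (fun x => Matrix.vecMul x W') hvm
      simp only [Matrix.vecMul_vecMul, hWW', Matrix.vecMul_one] at h2
      have h3 := congrFun h2 (Fin.last (d+1))
      simp only [Fin.snoc_last, Matrix.vecMul, dotProduct, ite_mul, zero_mul,
        Finset.sum_ite_eq, Finset.sum_ite_eq', Finset.mem_univ, if_true] at h3
      rcases mul_eq_zero.mp h3.symm with h | h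
      · exact ht0 h
      · exact hg h
  refine ⟨hCunit, ?_⟩
  have hCC' : C * Ring.inverse C = 1 := Ring.mul_inverse_cancel _ hCunit
  have hs'C : Matrix.vecMul (fun i : Fin (d+1) => W' 0 i.castSucc) C
      = fun j => if j = Fin.last d then -g else 0 := by
    ext j
    have h1 := congrFun (congrFun hW'W 0) j.succ
    simp only [Matrix.mul_apply, Matrix.one_apply, if_neg (Fin.succ_ne_zero j).symm] at h1
    rw [Fin.sum_univ_castSucc] at h1
    have h2 : W (Fin.last (d+1)) j.succ = if j = Fin.last d then 1 else 0 := by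
      rw [hrow]
      simp [Fin.succ_eq_last_succ]
    rw [h2] at h1
    simp only [hCdef, Matrix.vecMul, dotProduct, Matrix.submatrix_apply]
    rcases eq_or_ne j (Fin.last d) with hj | hj
    · subst hj
      simp only [eq_self_iff_true, if_true, mul_one] at h1 ⊢
      exact eq_neg_of_add_eq_zero_left h1
    · simp only [if_neg hj] at h1 ⊢
      simpa using h1
  have hvC : (fun i : Fin (d+1) => W' 0 i.castSucc)
      = Matrix.vecMul (fun j => if j = Fin.last d then -g else 0) (Ring.inverse C) := by
    have := congrArg (fun x => Matrix.vecMul x (Ring.inverse C)) hs'C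
    simpa [Matrix.vecMul_vecMul, hCC'] using this
  have h5 := congrFun hvC 0
  have h6 : W' 0 (Fin.castSucc 0) = 1 := by
    rw [show Fin.castSucc (0 : Fin (d+1)) = 0 by simp, hW'col, if_pos rfl]
  rw [h6] at h5
  simp only [Matrix.vecMul, dotProduct, ite_mul, zero_mul, Finset.sum_ite_eq,
    Finset.sum_ite_eq', Finset.mem_univ, if_true] at h5
  have h7 := congrArg (fun y => (-g)⁻¹ * y) h5
  simp only [mul_one, ← mul_assoc] at h7
  rw [inv_mul_cancel₀ (neg_ne_zero.mpr hg), one_mul] at h7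
  rw [← h7, inv_neg]


end Aux

private lemma map_PAQ {K F X : Type*} [Field K] [DivisionRing F] [Algebra K F]
    (φ : FreeAlgebra K X →ₐ[K] F) {d : ℕ} (P₁ Q₁ : Matrix (Fin d) (Fin d) K)
    (A : Matrix (Fin d) (Fin d) (FreeAlgebra K X)) :
    ((P₁.map ⇑(algebraMap K (FreeAlgebra K X))) * A *
      (Q₁.map ⇑(algebraMap K (FreeAlgebra K X)))).map ⇑φ
      = P₁.map ⇑(algebraMap K F) * A.map ⇑φ * Q₁.map ⇑(algebraMap K F) := by
  have hm : ∀ (R₁ : Matrix (Fin d) (Fin d) K),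
      (R₁.map ⇑(algebraMap K (FreeAlgebra K X))).map ⇑φ = R₁.map ⇑(algebraMap K F) := by
    intro R₁
    ext i j
    simp only [Matrix.map_map, Matrix.map_apply, Function.comp_apply]
    exact φ.commutes _
  have hmul : ∀ {a b c : ℕ} (M : Matrix (Fin a) (Fin b) (FreeAlgebra K X))
      (N : Matrix (Fin b) (Fin c) (FreeAlgebra K X)),
      (M * N).map ⇑φ = M.map ⇑φ * N.map ⇑φ := fun M N =>
    Matrix.map_mul (f := φ.toRingHom)
  rw [hmul, hmul, hm, hm]

private lemma isUnit_map_algF {K F : Type*} [Field K] [DivisionRing F] [Algebra K F] {d : ℕ}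
    {P₁ : Matrix (Fin d) (Fin d) K} (h : IsUnit P₁) : IsUnit (P₁.map ⇑(algebraMap K F)) := by
  have := h.map (RingHom.mapMatrix (algebraMap K F))
  simpa [RingHom.mapMatrix_apply] using this


private lemma value_PAQ {K F X : Type*} [Field K] [DivisionRing F] [Algebra K F]
    (φ : FreeAlgebra K X →ₐ[K] F) {d : ℕ} (u : Matrix (Fin 1) (Fin d) K)
    (v : Matrix (Fin d) (Fin 1) K) (A : Matrix (Fin d) (Fin d) (FreeAlgebra K X))
    (P₁ Q₁ : Matrix (Fin d) (Fin d) K) (hP₁ : IsUnit P₁) (hQ₁ : IsUnit Q₁)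
    (hA : IsUnit (A.map ⇑φ)) :
    ((u * Q₁).map ⇑(algebraMap K F)) *
      Ring.inverse (P₁.map ⇑(algebraMap K F) * A.map ⇑φ * Q₁.map ⇑(algebraMap K F)) *
      ((P₁ * v).map ⇑(algebraMap K F))
      = (u.map ⇑(algebraMap K F)) * Ring.inverse (A.map ⇑φ) * (v.map ⇑(algebraMap K F)) := by
  have hPf := isUnit_map_algF (F := F) hP₁
  have hQf := isUnit_map_algF (F := F) hQ₁
  rw [Matrix.map_mul (f := (algebraMap K F)), Matrix.map_mul (f := (algebraMap K F))]
  rw [ring_inverse_mul (hPf.mul hA) hQf, ring_inverse_mul hPf hA]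
  have cP : Ring.inverse (P₁.map ⇑(algebraMap K F)) *
      ((P₁.map ⇑(algebraMap K F)) * (v.map ⇑(algebraMap K F))) = v.map ⇑(algebraMap K F) := by
    rw [← Matrix.mul_assoc, Ring.inverse_mul_cancel _ hPf, Matrix.one_mul]
  have cQ : ∀ x : Matrix (Fin d) (Fin 1) F,
      (Q₁.map ⇑(algebraMap K F)) * (Ring.inverse (Q₁.map ⇑(algebraMap K F)) * x) = x := by
    intro x
    rw [← Matrix.mul_assoc, Ring.mul_inverse_cancel _ hQf, Matrix.one_mul]
  simp only [Matrix.mul_assoc]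
  rw [cP, cQ]

private lemma entry_form {F : Type*} [DivisionRing F] {d : ℕ} (X : Matrix (Fin 1) (Fin d) F)
    (Y : Matrix (Fin d) (Fin d) F) (Z : Matrix (Fin d) (Fin 1) F) :
    (X * Y * Z) 0 0 = ∑ j, Matrix.vecMul (fun i => X 0 i) Y j * Z j 0 := by
  simp only [Matrix.mul_apply, Matrix.vecMul, dotProduct]

private lemma lin_PAQ {K X : Type*} [Field K] {d : ℕ} (P₁ Q₁ : Matrix (Fin d) (Fin d) K)
    (A : Matrix (Fin d) (Fin d) (FreeAlgebra K X))
    (h : ∀ i j, A i j ∈ Submodule.span K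
      ({1} ∪ Set.range (FreeAlgebra.ι K) : Set (FreeAlgebra K X))) :
    ∀ i j, ((P₁.map ⇑(algebraMap K (FreeAlgebra K X))) * A *
      (Q₁.map ⇑(algebraMap K (FreeAlgebra K X)))) i j ∈ Submodule.span K
      ({1} ∪ Set.range (FreeAlgebra.ι K) : Set (FreeAlgebra K X)) := by
  intro i j
  rw [Matrix.mul_apply]
  refine Submodule.sum_mem _ fun l _ => ?_
  rw [Matrix.mul_apply, Finset.sum_mul]
  refine Submodule.sum_mem _ fun m _ => ?_
  have e : (P₁.map ⇑(algebraMap K (FreeAlgebra K X))) i m * A m l *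
      (Q₁.map ⇑(algebraMap K (FreeAlgebra K X))) l j = (P₁ i m * Q₁ l j) • A m l := by
    rw [Matrix.map_apply, Matrix.map_apply, mul_assoc,
      ← Algebra.commutes (Q₁ l j) (A m l), ← mul_assoc, ← _root_.map_mul, ← Algebra.smul_def]
  rw [e]
  exact Submodule.smul_mem _ _ (h m l)

private lemma full_of_unit {K F X : Type*} [Field K] [DivisionRing F] [Algebra K F]
    (φ : FreeAlgebra K X →ₐ[K] F) {d : ℕ} {M : Matrix (Fin d) (Fin d) (FreeAlgebra K X)}
    (h : IsUnit (M.map ⇑φ)) (hfac : ∀ {l : ℕ}, l < d →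
      ∀ (T : Matrix (Fin d) (Fin l) F) (U : Matrix (Fin l) (Fin d) F), ¬ IsUnit (T * U)) :
    ∀ l < d, ∀ (T : Matrix (Fin d) (Fin l) (FreeAlgebra K X))
      (U : Matrix (Fin l) (Fin d) (FreeAlgebra K X)), M ≠ T * U := by
  intro l hl T U hTU
  have h1 : IsUnit ((T * U).map ⇑φ) := hTU ▸ h
  have h2 : (T * U).map ⇑φ = (T.map ⇑φ) * (U.map ⇑φ) := Matrix.map_mul (f := φ.toRingHom)
  rw [h2] at h1
  exact hfac hl _ _ h1

private lemma unit_one_add_sq_zero {R : Type*} [Ring R] {E : R} (h : E * E = 0) :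
    IsUnit (1 + E) := by
  refine ⟨⟨1 + E, 1 - E, ?_, ?_⟩, rfl⟩
  · have : (1 + E) * (1 - E) = 1 - E * E := by noncomm_ring
    rw [this, h, sub_zero]
  · have : (1 - E) * (1 + E) = 1 - E * E := by noncomm_ring
    rw [this, h, sub_zero]

private lemma mul_elem_row {K R : Type*} [CommSemiring K] [Ring R] [Algebra K R] {d : ℕ}
    (B : Matrix (Fin d) (Fin d) R) (c : Fin d → K) (i₀ : Fin d) (i j : Fin d) :
    (B * (((1 : Matrix (Fin d) (Fin d) K) +
        Matrix.of fun i j => if i = i₀ then c j else 0)).map ⇑(algebraMap K R)) i j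
      = B i j + B i i₀ * algebraMap K R (c j) := by
  rw [Matrix.mul_apply]
  simp only [Matrix.map_apply, Matrix.add_apply, Matrix.of_apply, Matrix.one_apply,
    _root_.map_add, apply_ite (algebraMap K R), _root_.map_zero, _root_.map_one, mul_add]
  rw [Finset.sum_add_distrib]
  congr 1
  · simp [mul_ite, Finset.sum_ite_eq']
  · simp [mul_ite, Finset.sum_ite_eq']

private lemma elem_mul_col {K R : Type*} [CommSemiring K] [Ring R] [Algebra K R] {d : ℕ}
    (B : Matrix (Fin d) (Fin d) R) (c : Fin d → K) (j₀ : Fin d) (i j : Fin d) :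
    ((((1 : Matrix (Fin d) (Fin d) K) +
        Matrix.of fun i j => if j = j₀ then c i else 0)).map ⇑(algebraMap K R) * B) i j
      = B i j + algebraMap K R (c i) * B j₀ j := by
  rw [Matrix.mul_apply]
  simp only [Matrix.map_apply, Matrix.add_apply, Matrix.of_apply, Matrix.one_apply,
    _root_.map_add, apply_ite (algebraMap K R), _root_.map_zero, _root_.map_one, add_mul]
  rw [Finset.sum_add_distrib]
  congr 1
  · simp [ite_mul, Finset.sum_ite_eq]
  · simp [ite_mul, Finset.sum_ite_eq']





private lemma border_mem {K F X : Type*} [Field K] [DivisionRing F] [Algebra K F]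
    (φ : FreeAlgebra K X →ₐ[K] F) {f g : F} (hfg : f * g = 1) (hgf : g * f = 1)
    {d : ℕ} (hd : d ∈ repDims φ g) : (d + 1) ∈ repDims φ f := by
  obtain ⟨u₀, v₀, A₀, hlin₀, hfull₀, hunit₀, hval₀⟩ := hd
  set Af := A₀.map ⇑φ with hAf
  set A' := Ring.inverse Af with hA'
  have hAA' : Af * A' = 1 := Ring.mul_inverse_cancel _ hunit₀
  have hA'A : A' * Af = 1 := Ring.inverse_mul_cancel _ hunit₀
  set b : Fin d → F := fun i => algebraMap K F (v₀ i 0) with hbdef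
  set c : Fin d → F := fun j => algebraMap K F (u₀ 0 j) with hcdef
  set p : Fin d → F := fun i => ∑ j, A' i j * b j with hpdef
  set q : Fin d → F := fun j => ∑ i, c i * A' i j with hqdef
  have hqb : ∑ j, q j * b j = g := by
    rw [← hval₀]
    simp only [Matrix.mul_apply, Matrix.map_apply, hqdef, hcdef, hbdef, Finset.sum_mul]
  have hAp : ∀ i, ∑ k, Af i k * p k = b i := by
    intro i
    have e1 : ∀ k, Af i k * p k = ∑ j, Af i k * A' k j * b j := by
      intro k
      rw [hpdef, Finset.mul_sum]
      simp only [mul_assoc]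
    rw [Finset.sum_congr rfl fun k _ => e1 k, Finset.sum_comm]
    have e2 : ∀ j, ∑ k, Af i k * A' k j * b j = ((Af * A') i j) * b j := by
      intro j; rw [Matrix.mul_apply, Finset.sum_mul]
    rw [Finset.sum_congr rfl fun j _ => e2 j, hAA']
    simp [Matrix.one_apply, ite_mul]
  have hqA : ∀ j, ∑ k, q k * Af k j = c j := by
    intro j
    have e1 : ∀ k, q k * Af k j = ∑ i, c i * A' i k * Af k j := by
      intro k
      rw [hqdef, Finset.sum_mul]
    rw [Finset.sum_congr rfl fun k _ => e1 k, Finset.sum_comm]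
    have e2 : ∀ i, ∑ k, c i * A' i k * Af k j = c i * ((A' * Af) i j) := by
      intro i
      rw [Matrix.mul_apply, Finset.mul_sum]
      simp only [mul_assoc]
    rw [Finset.sum_congr rfl fun i _ => e2 i, hA'A]
    simp [Matrix.one_apply, mul_ite]
  have hcp : ∑ i, c i * p i = g := by
    have e1 : ∀ i, c i * p i = ∑ j, c i * A' i j * b j := by
      intro i
      rw [hpdef, Finset.mul_sum]
      simp only [mul_assoc]
    rw [Finset.sum_congr rfl fun i _ => e1 i, Finset.sum_comm]
    have e2 : ∀ j, ∑ i, c i * A' i j * b j = q j * b j := by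
      intro j
      rw [hqdef, Finset.sum_mul]
    rw [Finset.sum_congr rfl fun j _ => e2 j, hqb]
  -- the bordered matrix
  set M : Matrix (Fin (d+1)) (Fin (d+1)) (FreeAlgebra K X) := Matrix.of fun i j =>
    Fin.lastCases (Fin.lastCases 0 (fun j' => algebraMap K (FreeAlgebra K X) (u₀ 0 j')) j)
      (fun i' => Fin.lastCases (algebraMap K (FreeAlgebra K X) (v₀ i' 0))
        (fun j' => A₀ i' j') j) i with hMdef
  set N : Matrix (Fin (d+1)) (Fin (d+1)) F := Matrix.of fun i j =>
    Fin.lastCases (Fin.lastCases (-f) (fun j' => f * q j') j)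
      (fun i' => Fin.lastCases (p i' * f)
        (fun j' => A' i' j' + p i' * -f * q j') j) i with hNdef
  have hM1 : ∀ (i' j' : Fin d), (M.map ⇑φ) i'.castSucc j'.castSucc = Af i' j' := by
    intro i' j'; simp [hMdef, hAf]
  have hM2 : ∀ i' : Fin d, (M.map ⇑φ) i'.castSucc (Fin.last d) = b i' := by
    intro i'; simp [hMdef, hbdef]
  have hM3 : ∀ j' : Fin d, (M.map ⇑φ) (Fin.last d) j'.castSucc = c j' := by
    intro j'; simp [hMdef, hcdef]
  have hM4 : (M.map ⇑φ) (Fin.last d) (Fin.last d) = 0 := by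
    simp [hMdef]
  have hN1 : ∀ (i' j' : Fin d), N i'.castSucc j'.castSucc = A' i' j' + p i' * -f * q j' := by
    intro i' j'; simp [hNdef]
  have hN2 : ∀ i' : Fin d, N i'.castSucc (Fin.last d) = p i' * f := by
    intro i'; simp [hNdef]
  have hN3 : ∀ j' : Fin d, N (Fin.last d) j'.castSucc = f * q j' := by
    intro j'; simp [hNdef]
  have hN4 : N (Fin.last d) (Fin.last d) = -f := by
    simp [hNdef]
  have hMN : (M.map ⇑φ) * N = 1 := by
    ext i j
    rw [Matrix.mul_apply, Fin.sum_univ_castSucc]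
    refine Fin.lastCases ?_ (fun i' => ?_) i <;>
      refine Fin.lastCases ?_ (fun j' => ?_) j
    · -- (last, last)
      simp only [hM3, hM4, hN2, hN4, zero_mul, add_zero]
      have e1 : ∀ k, c k * (p k * f) = c k * p k * f := by intro k; rw [mul_assoc]
      rw [Finset.sum_congr rfl fun k _ => e1 k, ← Finset.sum_mul, hcp, hgf]
      simp [Matrix.one_apply]
    · -- (last, cs j')
      simp only [hM3, hM4, hN1, hN3, zero_mul, add_zero]
      have e1 : ∀ k, c k * (A' k j' + p k * -f * q j')
          = c k * A' k j' + (c k * p k) * (-f * q j') := by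
        intro k
        rw [mul_add]
        congr 1
        simp only [mul_assoc]
      rw [Finset.sum_congr rfl fun k _ => e1 k, Finset.sum_add_distrib, ← Finset.sum_mul, hcp]
      have eq1 : ∑ k, c k * A' k j' = q j' := by rw [hqdef]
      rw [eq1]
      have : g * (-f * q j') = -q j' := by
        rw [← mul_assoc, mul_neg, hgf, neg_one_mul]
      rw [this]
      simp [Matrix.one_apply, (Fin.castSucc_lt_last j').ne']
    · -- (cs i', last)
      simp only [hM1, hM2, hN2, hN4]
      have e1 : ∀ k, Af i' k * (p k * f) = Af i' k * p k * f := by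
        intro k; rw [mul_assoc]
      rw [Finset.sum_congr rfl fun k _ => e1 k, ← Finset.sum_mul, hAp i']
      rw [mul_neg, add_neg_cancel]
      simp [Matrix.one_apply, (Fin.castSucc_lt_last i').ne]
    · -- (cs i', cs j')
      simp only [hM1, hM2, hN1, hN3]
      have e1 : ∀ k, Af i' k * (A' k j' + p k * -f * q j')
          = Af i' k * A' k j' + (Af i' k * p k) * (-f * q j') := by
        intro k
        rw [mul_add]
        congr 1
        simp only [mul_assoc]
      rw [Finset.sum_congr rfl fun k _ => e1 k, Finset.sum_add_distrib, ← Finset.sum_mul,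
        hAp i']
      have e2 : ∑ k, Af i' k * A' k j' = (1 : Matrix (Fin d) (Fin d) F) i' j' := by
        rw [← Matrix.mul_apply, hAA']
      rw [e2]
      have e3 : b i' * (-f * q j') + b i' * (f * q j') = 0 := by
        rw [← mul_add, neg_mul, neg_add_cancel, mul_zero]
      rw [add_assoc, e3, add_zero]
      simp [Matrix.one_apply, Fin.castSucc_inj]
  have hNM : N * (M.map ⇑φ) = 1 := by
    ext i j
    rw [Matrix.mul_apply, Fin.sum_univ_castSucc]
    refine Fin.lastCases ?_ (fun i' => ?_) i <;>
      refine Fin.lastCases ?_ (fun j' => ?_) j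
    · -- (last, last)
      simp only [hM2, hM4, hN3, hN4, mul_zero, add_zero]
      have e1 : ∀ k, f * q k * b k = f * (q k * b k) := by intro k; rw [mul_assoc]
      rw [Finset.sum_congr rfl fun k _ => e1 k, ← Finset.mul_sum, hqb, hfg]
      simp [Matrix.one_apply]
    · -- (last, cs j')
      simp only [hM1, hM3, hN3, hN4]
      have e1 : ∀ k, f * q k * Af k j' = f * (q k * Af k j') := by intro k; rw [mul_assoc]
      rw [Finset.sum_congr rfl fun k _ => e1 k, ← Finset.mul_sum, hqA j']
      rw [neg_mul, add_neg_cancel]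
      simp [Matrix.one_apply, (Fin.castSucc_lt_last j').ne']
    · -- (cs i', last)
      simp only [hM2, hM4, hN1, hN2, mul_zero, add_zero]
      have e1 : ∀ k, (A' i' k + p i' * -f * q k) * b k
          = A' i' k * b k + (p i' * -f) * (q k * b k) := by
        intro k
        rw [add_mul]
        congr 1
        simp only [mul_assoc]
      rw [Finset.sum_congr rfl fun k _ => e1 k, Finset.sum_add_distrib, ← Finset.mul_sum,
        hqb]
      have eq1 : ∑ k, A' i' k * b k = p i' := by rw [hpdef]
      rw [eq1]
      have : p i' * -f * g = -p i' := by
        rw [mul_assoc, neg_mul, hfg, mul_neg, mul_one]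
      rw [this, add_neg_cancel]
      simp [Matrix.one_apply, (Fin.castSucc_lt_last i').ne]
    · -- (cs i', cs j')
      simp only [hM1, hM3, hN1, hN2]
      have e1 : ∀ k, (A' i' k + p i' * -f * q k) * Af k j'
          = A' i' k * Af k j' + (p i' * -f) * (q k * Af k j') := by
        intro k
        rw [add_mul]
        congr 1
        simp only [mul_assoc]
      rw [Finset.sum_congr rfl fun k _ => e1 k, Finset.sum_add_distrib, ← Finset.mul_sum,
        hqA j']
      have e2 : ∑ k, A' i' k * Af k j' = (1 : Matrix (Fin d) (Fin d) F) i' j' := by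
        rw [← Matrix.mul_apply, hA'A]
      rw [e2]
      have e3 : p i' * -f * c j' + p i' * f * c j' = 0 := by
        rw [mul_neg, neg_mul, neg_add_cancel]
      rw [add_assoc, e3, add_zero]
      simp [Matrix.one_apply, Fin.castSucc_inj]
  have hMunit : IsUnit (M.map ⇑φ) := ⟨⟨M.map ⇑φ, N, hMN, hNM⟩, rfl⟩
  refine ⟨Matrix.of fun _ j => if j = Fin.last d then (-1 : K) else 0,
    Matrix.of fun i _ => if i = Fin.last d then (1 : K) else 0, M, ?_, ?_, hMunit, ?_⟩
  · -- linearity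
    intro i j
    refine Fin.lastCases ?_ (fun i' => ?_) i
    · refine Fin.lastCases ?_ (fun j' => ?_) j
      · simp only [hMdef, Matrix.of_apply, Fin.lastCases_last]
        exact Submodule.zero_mem _
      · simp only [hMdef, Matrix.of_apply, Fin.lastCases_last, Fin.lastCases_castSucc]
        rw [Algebra.algebraMap_eq_smul_one]
        exact Submodule.smul_mem _ _ (Submodule.subset_span (by simp))
    · refine Fin.lastCases ?_ (fun j' => ?_) j
      · simp only [hMdef, Matrix.of_apply, Fin.lastCases_last, Fin.lastCases_castSucc]
        rw [Algebra.algebraMap_eq_smul_one]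
        exact Submodule.smul_mem _ _ (Submodule.subset_span (by simp))
      · simp only [hMdef, Matrix.of_apply, Fin.lastCases_castSucc]
        exact hlin₀ i' j'
  · -- fullness
    intro l hl T U hTU
    have h1 : IsUnit ((T * U).map ⇑φ) := hTU ▸ hMunit
    have h2 : (T * U).map ⇑φ = (T.map ⇑φ) * (U.map ⇑φ) :=
      Matrix.map_mul (f := φ.toRingHom)
    rw [h2] at h1
    exact not_isUnit_of_factor hl _ _ h1
  · -- the value
    rw [ring_inverse_eq hMN hNM]
    rw [Matrix.mul_apply]
    have e1 : ∀ j, ((Matrix.of fun (_ : Fin 1) j => if j = Fin.last d then (-1 : K) else 0).map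
        (algebraMap K F) * N) 0 j = algebraMap K F (-1) * N (Fin.last d) j := by
      intro j
      rw [Matrix.mul_apply]
      simp only [Matrix.map_apply, Matrix.of_apply, apply_ite (algebraMap K F), map_zero,
        ite_mul, zero_mul, Finset.sum_ite_eq', Finset.mem_univ, if_true]
    rw [Finset.sum_congr rfl fun j _ => by rw [e1 j]]
    simp only [Matrix.map_apply, Matrix.of_apply, apply_ite (algebraMap K F), _root_.map_zero,
      _root_.map_one, mul_ite, mul_zero, mul_one, Finset.sum_ite_eq', Finset.mem_univ, if_true]
    rw [hN4, _root_.map_neg, _root_.map_one]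
    simp

/-- If `f` is given by a minimal linear representation of dimension `n` whose
system matrix can be brought by invertible scalar matrices to a form with
first column `e₁` and last row `e_nᵀ` (type `(1,1)`), then `f⁻¹` has a linear
representation of dimension `n - 1`, and `rank f⁻¹ = rank f - 1`. -/
theorem rank_inv_type_one_one {K F X : Type*} [Field K] [DivisionRing F] [Algebra K F]
    (φ : FreeAlgebra K X →ₐ[K] F) (hinj : Function.Injective φ)
    (hfullinv : ∀ (m : ℕ) (M : Matrix (Fin m) (Fin m) (FreeAlgebra K X)),
      (∀ l < m, ∀ (T : Matrix (Fin m) (Fin l) (FreeAlgebra K X))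
        (U : Matrix (Fin l) (Fin m) (FreeAlgebra K X)), M ≠ T * U) →
      IsUnit (M.map ⇑φ))
    (f : F) (hf0 : f ≠ 0) {n : ℕ} (hn : 2 ≤ n)
    (u : Matrix (Fin 1) (Fin n) K) (v : Matrix (Fin n) (Fin 1) K)
    (A : Matrix (Fin n) (Fin n) (FreeAlgebra K X))
    (hlin : ∀ i j, A i j ∈ Submodule.span K
      ({1} ∪ Set.range (FreeAlgebra.ι K) : Set (FreeAlgebra K X)))
    (hfullA : ∀ l < n, ∀ (T : Matrix (Fin n) (Fin l) (FreeAlgebra K X))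
      (U : Matrix (Fin l) (Fin n) (FreeAlgebra K X)), A ≠ T * U)
    (hA : IsUnit (A.map ⇑φ))
    (hf : ((u.map ⇑(algebraMap K F)) * Ring.inverse (A.map ⇑φ) *
      (v.map ⇑(algebraMap K F))) 0 0 = f)
    (hmin : freeRank φ f = n)
    (P Q : Matrix (Fin n) (Fin n) K) (hP : IsUnit P) (hQ : IsUnit Q)
    (hcol : ∀ i : Fin n,
      ((P.map ⇑(algebraMap K (FreeAlgebra K X))) * A *
        (Q.map ⇑(algebraMap K (FreeAlgebra K X)))) i ⟨0, by omega⟩ =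
        if i = ⟨0, by omega⟩ then 1 else 0)
    (hrow : ∀ j : Fin n,
      ((P.map ⇑(algebraMap K (FreeAlgebra K X))) * A *
        (Q.map ⇑(algebraMap K (FreeAlgebra K X)))) ⟨n - 1, by omega⟩ j =
        if j = ⟨n - 1, by omega⟩ then 1 else 0) :
    (n - 1) ∈ repDims φ f⁻¹ ∧ freeRank φ f⁻¹ = n - 1 := by
  obtain ⟨k, rfl⟩ : ∃ k, n = k + 2 := ⟨n - 2, by omega⟩
  set B₀ : Matrix (Fin (k + 2)) (Fin (k + 2)) (FreeAlgebra K X) :=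
    (P.map ⇑(algebraMap K (FreeAlgebra K X))) * A *
      (Q.map ⇑(algebraMap K (FreeAlgebra K X))) with hB₀def
  have hlne : Fin.last (k + 1) ≠ (0 : Fin (k + 2)) := by simp [Fin.ext_iff]
  have hB0col : ∀ i, B₀ i 0 = if i = 0 then 1 else 0 := fun i => hcol i
  have hB0row : ∀ j, B₀ (Fin.last (k + 1)) j = if j = Fin.last (k + 1) then 1 else 0 :=
    fun j => hrow j
  have hW0unit : IsUnit (B₀.map ⇑φ) := by
    rw [hB₀def, map_PAQ φ P Q A]
    exact ((isUnit_map_algF hP).mul hA).mul (isUnit_map_algF hQ)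
  have hW0col : ∀ i, (B₀.map ⇑φ) i 0 = if i = 0 then 1 else 0 := by
    intro i
    rw [Matrix.map_apply, hB0col i, apply_ite ⇑φ, _root_.map_one, _root_.map_zero]
  have hW0row : ∀ j, (B₀.map ⇑φ) (Fin.last (k + 1)) j
      = if j = Fin.last (k + 1) then 1 else 0 := by
    intro j
    rw [Matrix.map_apply, hB0row j, apply_ite ⇑φ, _root_.map_one, _root_.map_zero]
  have hfB0 : f = (((u * Q).map ⇑(algebraMap K F)) * Ring.inverse (B₀.map ⇑φ) *
      ((P * v).map ⇑(algebraMap K F))) 0 0 := by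
    rw [hB₀def, map_PAQ φ P Q A, value_PAQ φ u v A P Q hP hQ hA, hf]
  -- λ ≠ 0
  have hlam : (u * Q) 0 0 ≠ 0 := by
    intro hlam0
    have hsm : (B₀.submatrix Fin.succ Fin.succ).map ⇑φ
        = (B₀.map ⇑φ).submatrix Fin.succ Fin.succ := rfl
    have hmem : (k + 1) ∈ repDims φ f := by
      refine ⟨(u * Q).submatrix id Fin.succ, (P * v).submatrix Fin.succ id,
        B₀.submatrix Fin.succ Fin.succ, ?_, ?_, ?_, ?_⟩
      · intro i j
        rw [Matrix.submatrix_apply, hB₀def]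
        exact lin_PAQ P Q A hlin _ _
      · refine full_of_unit φ ?_ (fun hl T U => not_isUnit_of_factor hl T U)
        rw [hsm]
        exact del_first_unit _ hW0unit hW0col
      · rw [hsm]
        exact del_first_unit _ hW0unit hW0col
      · rw [hfB0, entry_form, entry_form, hsm]
        exact del_first_value (B₀.map ⇑φ) hW0unit hW0col
          (fun i => algebraMap K F ((u * Q) 0 i)) (fun i => algebraMap K F ((P * v) i 0))
          (by simp only [hlam0, _root_.map_zero])
    have h2 : freeRank φ f ≤ k + 1 := Nat.sInf_le hmem
    rw [hmin] at h2
    omega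
  -- μ ≠ 0
  have hmu : (P * v) (Fin.last (k + 1)) 0 ≠ 0 := by
    intro hmu0
    have hsm : (B₀.submatrix Fin.castSucc Fin.castSucc).map ⇑φ
        = (B₀.map ⇑φ).submatrix Fin.castSucc Fin.castSucc := rfl
    have hmem : (k + 1) ∈ repDims φ f := by
      refine ⟨(u * Q).submatrix id Fin.castSucc, (P * v).submatrix Fin.castSucc id,
        B₀.submatrix Fin.castSucc Fin.castSucc, ?_, ?_, ?_, ?_⟩
      · intro i j
        rw [Matrix.submatrix_apply, hB₀def]
        exact lin_PAQ P Q A hlin _ _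
      · refine full_of_unit φ ?_ (fun hl T U => not_isUnit_of_factor hl T U)
        rw [hsm]
        exact del_last_unit _ hW0unit hW0row
      · rw [hsm]
        exact del_last_unit _ hW0unit hW0row
      · rw [hfB0, entry_form, entry_form, hsm]
        exact del_last_value (B₀.map ⇑φ) hW0unit hW0row
          (fun i => algebraMap K F ((u * Q) 0 i)) (fun i => algebraMap K F ((P * v) i 0))
          (by simp only [hmu0, _root_.map_zero])
    have h2 : freeRank φ f ≤ k + 1 := Nat.sInf_le hmem
    rw [hmin] at h2
    omega
  -- elementary transformations
  set lam := (u * Q) 0 0 with hlamdef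
  set mu := (P * v) (Fin.last (k + 1)) 0 with hmudef
  set cvec : Fin (k + 2) → K := fun j => if j = 0 then 0 else -((u * Q) 0 j) / lam with hcvec
  set dvec : Fin (k + 2) → K :=
    fun i => if i = Fin.last (k + 1) then 0 else -((P * v) i 0) / mu with hdvec
  have hc0 : cvec 0 = 0 := by rw [hcvec]; simp
  have hd0 : dvec (Fin.last (k + 1)) = 0 := by rw [hdvec]; simp
  set Q' : Matrix (Fin (k + 2)) (Fin (k + 2)) K :=
    1 + Matrix.of fun i j => if i = 0 then cvec j else 0 with hQ'def
  set P' : Matrix (Fin (k + 2)) (Fin (k + 2)) K :=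
    1 + Matrix.of fun i j => if j = Fin.last (k + 1) then dvec i else 0 with hP'def
  have hQ'unit : IsUnit Q' := by
    rw [hQ'def]
    apply unit_one_add_sq_zero
    ext i j
    rw [Matrix.mul_apply]
    simp only [Matrix.of_apply, ite_mul, zero_mul, Matrix.zero_apply]
    rcases eq_or_ne i 0 with hi | hi
    · subst hi
      simp [mul_ite, Finset.sum_ite_eq', hc0]
    · simp [hi]
  have hP'unit : IsUnit P' := by
    rw [hP'def]
    apply unit_one_add_sq_zero
    ext i j
    rw [Matrix.mul_apply]
    simp only [Matrix.of_apply, mul_ite, mul_zero, Matrix.zero_apply]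
    rcases eq_or_ne j (Fin.last (k + 1)) with hj | hj
    · subst hj
      simp [ite_mul, Finset.sum_ite_eq', hd0]
    · simp [hj]
  set B₁ : Matrix (Fin (k + 2)) (Fin (k + 2)) (FreeAlgebra K X) :=
    B₀ * (Q'.map ⇑(algebraMap K (FreeAlgebra K X))) with hB₁def
  set B₂ : Matrix (Fin (k + 2)) (Fin (k + 2)) (FreeAlgebra K X) :=
    (P'.map ⇑(algebraMap K (FreeAlgebra K X))) * B₁ with hB₂def
  have hB1 : ∀ i j, B₁ i j = B₀ i j + B₀ i 0 * algebraMap K (FreeAlgebra K X) (cvec j) := by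
    intro i j
    rw [hB₁def, hQ'def]
    exact mul_elem_row B₀ cvec 0 i j
  have hB2 : ∀ i j, B₂ i j
      = B₁ i j + algebraMap K (FreeAlgebra K X) (dvec i) * B₁ (Fin.last (k + 1)) j := by
    intro i j
    rw [hB₂def, hP'def]
    exact elem_mul_col B₁ dvec (Fin.last (k + 1)) i j
  have hB1c : ∀ i, B₁ i 0 = if i = 0 then 1 else 0 := by
    intro i
    rw [hB1, hc0, _root_.map_zero, mul_zero, add_zero, hB0col]
  have hB1r : ∀ j, B₁ (Fin.last (k + 1)) j = if j = Fin.last (k + 1) then 1 else 0 := by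
    intro j
    rw [hB1, hB0row, hB0col, if_neg hlne, zero_mul, add_zero]
  have hB2c : ∀ i, B₂ i 0 = if i = 0 then 1 else 0 := by
    intro i
    rw [hB2, hB1c, hB1c, if_neg hlne, mul_zero, add_zero]
  have hB2r : ∀ j, B₂ (Fin.last (k + 1)) j = if j = Fin.last (k + 1) then 1 else 0 := by
    intro j
    rw [hB2, hd0, _root_.map_zero, zero_mul, add_zero, hB1r]
  have hB2eq : B₂ = ((P' * P).map ⇑(algebraMap K (FreeAlgebra K X))) * A *
      ((Q * Q').map ⇑(algebraMap K (FreeAlgebra K X))) := by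
    rw [hB₂def, hB₁def, hB₀def, Matrix.map_mul (f := algebraMap K (FreeAlgebra K X)),
      Matrix.map_mul (f := algebraMap K (FreeAlgebra K X))]
    simp only [Matrix.mul_assoc]
  have hB2lin : ∀ i j, B₂ i j ∈ Submodule.span K
      ({1} ∪ Set.range (FreeAlgebra.ι K) : Set (FreeAlgebra K X)) := by
    intro i j
    rw [hB2eq]
    exact lin_PAQ _ _ _ hlin i j
  have hWeq : B₂.map ⇑φ = ((P' * P).map ⇑(algebraMap K F)) * (A.map ⇑φ) *
      ((Q * Q').map ⇑(algebraMap K F)) := by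
    rw [hB2eq, map_PAQ]
  have hWunit : IsUnit (B₂.map ⇑φ) := by
    rw [hWeq]
    exact ((isUnit_map_algF (hP'unit.mul hP)).mul hA).mul (isUnit_map_algF (hQ.mul hQ'unit))
  have hWcol : ∀ i, (B₂.map ⇑φ) i 0 = if i = 0 then 1 else 0 := by
    intro i
    rw [Matrix.map_apply, hB2c i, apply_ite ⇑φ, _root_.map_one, _root_.map_zero]
  have hWrow : ∀ j, (B₂.map ⇑φ) (Fin.last (k + 1)) j
      = if j = Fin.last (k + 1) then 1 else 0 := by
    intro j
    rw [Matrix.map_apply, hB2r j, apply_ite ⇑φ, _root_.map_one, _root_.map_zero]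
  have hval2 : f = (((u * (Q * Q')).map ⇑(algebraMap K F)) * Ring.inverse (B₂.map ⇑φ) *
      (((P' * P) * v).map ⇑(algebraMap K F))) 0 0 := by
    rw [hWeq, value_PAQ φ u v A (P' * P) (Q * Q') (hP'unit.mul hP) (hQ.mul hQ'unit) hA, hf]
  have huQ : ∀ j, (u * (Q * Q')) 0 j = if j = 0 then lam else 0 := by
    intro j
    rw [← Matrix.mul_assoc, Matrix.mul_apply]
    simp only [hQ'def, Matrix.add_apply, Matrix.of_apply, Matrix.one_apply, mul_add]
    rw [Finset.sum_add_distrib]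
    have e1 : ∑ l, (u * Q) 0 l * (if l = j then 1 else 0) = (u * Q) 0 j := by
      simp [mul_ite, Finset.sum_ite_eq']
    have e2 : ∑ l, (u * Q) 0 l * (if l = 0 then cvec j else 0) = lam * cvec j := by
      simp [mul_ite, Finset.sum_ite_eq', hlamdef]
    rw [e1, e2]
    rcases eq_or_ne j 0 with hj | hj
    · subst hj
      rw [hc0, mul_zero, add_zero, if_pos rfl, hlamdef]
    · rw [hcvec]
      simp only [if_neg hj]
      rw [mul_comm, div_mul_cancel₀ _ hlam, add_neg_cancel]
  have hPv : ∀ i, ((P' * P) * v) i 0 = if i = Fin.last (k + 1) then mu else 0 := by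
    intro i
    rw [Matrix.mul_assoc, Matrix.mul_apply]
    simp only [hP'def, Matrix.add_apply, Matrix.of_apply, Matrix.one_apply, add_mul]
    rw [Finset.sum_add_distrib]
    have e1 : ∑ l, (if i = l then 1 else 0) * (P * v) l 0 = (P * v) i 0 := by
      simp [ite_mul, Finset.sum_ite_eq]
    have e2 : ∑ l, (if l = Fin.last (k + 1) then dvec i else 0) * (P * v) l 0
        = dvec i * mu := by
      simp [ite_mul, Finset.sum_ite_eq', hmudef]
    rw [e1, e2]
    rcases eq_or_ne i (Fin.last (k + 1)) with hi | hi
    · subst hi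
      rw [hd0, zero_mul, add_zero, if_pos rfl, hmudef]
    · rw [hdvec]
      simp only [if_neg hi]
      rw [div_mul_cancel₀ _ hmu, add_neg_cancel]
  have hfW : f = algebraMap K F lam * Ring.inverse (B₂.map ⇑φ) 0 (Fin.last (k + 1)) *
      algebraMap K F mu := by
    rw [hval2, entry_form]
    have e1 : ∀ j, Matrix.vecMul (fun i => ((u * (Q * Q')).map ⇑(algebraMap K F)) 0 i)
        (Ring.inverse (B₂.map ⇑φ)) j
        = algebraMap K F lam * Ring.inverse (B₂.map ⇑φ) 0 j := by
      intro j
      simp only [Matrix.vecMul, dotProduct, Matrix.map_apply]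
      rw [Finset.sum_congr rfl fun i _ => by rw [huQ i]]
      simp [apply_ite (algebraMap K F), ite_mul, Finset.sum_ite_eq']
    rw [Finset.sum_congr rfl fun j _ => by rw [e1 j, Matrix.map_apply, hPv j]]
    simp [apply_ite (algebraMap K F), mul_ite, Finset.sum_ite_eq']
  have hgne : Ring.inverse (B₂.map ⇑φ) 0 (Fin.last (k + 1)) ≠ 0 := by
    intro h0
    rw [h0, mul_zero, zero_mul] at hfW
    exact hf0 hfW
  obtain ⟨hCunit, hCentry⟩ := type11_inv (B₂.map ⇑φ) hWunit hWcol hWrow hgne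
  have hsm2 : (B₂.submatrix Fin.castSucc Fin.succ).map ⇑φ
      = (B₂.map ⇑φ).submatrix Fin.castSucc Fin.succ := rfl
  have hmemInv : (k + 1) ∈ repDims φ f⁻¹ := by
    refine ⟨Matrix.of fun _ j => if j = Fin.last k then -(lam * mu)⁻¹ else 0,
      Matrix.of fun i _ => if i = 0 then 1 else 0,
      B₂.submatrix Fin.castSucc Fin.succ, ?_, ?_, ?_, ?_⟩
    · intro i j
      rw [Matrix.submatrix_apply]
      exact hB2lin _ _
    · refine full_of_unit φ ?_ (fun hl T U => not_isUnit_of_factor hl T U)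
      rw [hsm2]
      exact hCunit
    · rw [hsm2]
      exact hCunit
    · rw [hsm2, entry_form]
      have e1 : ∀ j, Matrix.vecMul
          (fun i => ((Matrix.of fun (_ : Fin 1) j => if j = Fin.last k
            then -(lam * mu)⁻¹ else 0).map ⇑(algebraMap K F)) 0 i)
          (Ring.inverse ((B₂.map ⇑φ).submatrix Fin.castSucc Fin.succ)) j
          = algebraMap K F (-(lam * mu)⁻¹) *
            Ring.inverse ((B₂.map ⇑φ).submatrix Fin.castSucc Fin.succ) (Fin.last k) j := by
        intro j
        simp only [Matrix.vecMul, dotProduct, Matrix.map_apply, Matrix.of_apply]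
        simp [apply_ite (algebraMap K F), ite_mul, Finset.sum_ite_eq']
      rw [Finset.sum_congr rfl fun j _ => by rw [e1 j]]
      simp only [Matrix.map_apply, Matrix.of_apply, apply_ite (algebraMap K F),
        _root_.map_zero, _root_.map_one, mul_ite, mul_zero, mul_one,
        Finset.sum_ite_eq', Finset.mem_univ, if_true]
      rw [hCentry]
      -- now : algebraMap K F (-(lam * mu)⁻¹) * -(Ring.inverse (B₂.map φ) 0 (last))⁻¹ = f⁻¹
      have hfg : f = Ring.inverse (B₂.map ⇑φ) 0 (Fin.last (k + 1)) *
          algebraMap K F (lam * mu) := by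
        rw [hfW, _root_.map_mul, Algebra.commutes lam, mul_assoc]
      have hfinv : f⁻¹ = algebraMap K F ((lam * mu)⁻¹) *
          (Ring.inverse (B₂.map ⇑φ) 0 (Fin.last (k + 1)))⁻¹ := by
        rw [hfg, _root_.mul_inv_rev, map_inv₀]
      rw [hfinv, _root_.map_neg, neg_mul_neg]
  have hlow : ∀ dd ∈ repDims φ f⁻¹, k + 1 ≤ dd := by
    intro dd hdd
    have h1 : (dd + 1) ∈ repDims φ f :=
      border_mem φ (mul_inv_cancel₀ hf0) (inv_mul_cancel₀ hf0) hdd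
    have h2 : freeRank φ f ≤ dd + 1 := Nat.sInf_le h1
    rw [hmin] at h2
    omega
  constructor
  · simpa using hmemInv
  · have : freeRank φ f⁻¹ = k + 1 :=
      le_antisymm (Nat.sInf_le hmemInv) (le_csInf ⟨k + 1, hmemInv⟩ hlow)
    simpa using this
end

section
/- A nonzero element f of the free field lies in the ground field K if and only if rank(f) = rank(f⁻¹) = 1. -/
open Matrix

section Aux

open FreeAlgebra Polynomial

private lemma freefield_affine_decomp {K σ : Type*} [Field K] (a : FreeAlgebra K σ)
    (ha : a ∈ Submodule.span K ({1} ∪ Set.range (FreeAlgebra.ι K) : Set (FreeAlgebra K σ))) :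
    ∃ (c : K) (g : σ →₀ K), a = algebraMap K _ c + g.sum fun x k => k • FreeAlgebra.ι K x := by
  rw [Submodule.span_union, Submodule.mem_sup] at ha
  obtain ⟨p, hp, ℓ, hℓ, rfl⟩ := ha
  rw [Submodule.mem_span_singleton] at hp
  obtain ⟨c, rfl⟩ := hp
  rw [Finsupp.mem_span_range_iff_exists_finsupp] at hℓ
  obtain ⟨g, rfl⟩ := hℓ
  exact ⟨c, g, by rw [Algebra.algebraMap_eq_smul_one]⟩

private lemma freefield_sigma_eval {K σ : Type*} [Field K] [DecidableEq σ] (x₀ : σ) (c : K)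
    (g : σ →₀ K) :
    (FreeAlgebra.lift K (fun x => if x = x₀ then (Polynomial.X : Polynomial K) else 0))
      (algebraMap K _ c + g.sum fun x k => k • FreeAlgebra.ι K x)
      = C c + C (g x₀) * X := by
  rw [map_add, AlgHom.commutes, map_finsuppSum]
  simp only [_root_.map_smul, FreeAlgebra.lift_ι_apply, smul_ite, smul_zero]
  rw [Finsupp.sum_ite_eq' g x₀ (fun _ k => k • (X : Polynomial K))]
  simp [algebraMap_eq, smul_eq_C_mul]

/-- If a product of two affine-linear elements of the free algebra is a nonzero scalar,
then the first factor is a (nonzero) scalar. -/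
private lemma freefield_key_scalar {K σ : Type*} [Field K] (a a' : FreeAlgebra K σ)
    (ha : a ∈ Submodule.span K ({1} ∪ Set.range (FreeAlgebra.ι K) : Set (FreeAlgebra K σ)))
    (ha' : a' ∈ Submodule.span K ({1} ∪ Set.range (FreeAlgebra.ι K) : Set (FreeAlgebra K σ)))
    (s : K) (hs : s ≠ 0) (heq : a * a' = algebraMap K _ s) :
    ∃ c : K, c ≠ 0 ∧ a = algebraMap K _ c := by
  classical
  obtain ⟨c, g, rfl⟩ := freefield_affine_decomp a ha
  obtain ⟨c', g', rfl⟩ := freefield_affine_decomp a' ha'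
  have hπ := congrArg (FreeAlgebra.lift K (fun _ : σ => (0 : K))) heq
  rw [_root_.map_mul, AlgHom.commutes] at hπ
  have hc : c * c' = s := by
    have e : ∀ (d : K) (h : σ →₀ K),
        (FreeAlgebra.lift K (fun _ : σ => (0 : K)))
          (algebraMap K _ d + h.sum fun x k => k • FreeAlgebra.ι K x) = d := by
      intro d h
      rw [map_add, AlgHom.commutes, map_finsuppSum]
      simp [Algebra.algebraMap_self_apply]
    rw [e, e] at hπ
    simpa [Algebra.algebraMap_self_apply] using hπ
  have hcne : c ≠ 0 := fun h => hs (by rw [← hc, h, zero_mul])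
  have hc'ne : c' ≠ 0 := fun h => hs (by rw [← hc, h, mul_zero])
  have hg : g = 0 := by
    ext x₀
    have hσ := congrArg
      (FreeAlgebra.lift K (fun x => if x = x₀ then (Polynomial.X : Polynomial K) else 0)) heq
    rw [_root_.map_mul, AlgHom.commutes, freefield_sigma_eval, freefield_sigma_eval] at hσ
    set p := g x₀ with hp
    set q := g' x₀ with hq
    have hexp : (C c + C p * X) * (C c' + C q * X)
        = C (c*c') + C (c*q + p*c') * X + C (p*q) * X^2 := by
      simp only [_root_.map_mul, map_add]; ring
    rw [hexp] at hσ
    have h2 : p * q = 0 := by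
      have := congrArg (fun P => Polynomial.coeff P 2) hσ
      simpa [coeff_C, coeff_C_mul, coeff_X_pow, mul_assoc, algebraMap_eq] using this
    have h1 : c * q + p * c' = 0 := by
      have := congrArg (fun P => Polynomial.coeff P 1) hσ
      simpa [coeff_C, coeff_C_mul, coeff_X_pow, mul_assoc, algebraMap_eq] using this
    by_contra hp0
    rcases mul_eq_zero.mp h2 with h | h
    · exact hp0 h
    · rw [h, mul_zero, zero_add] at h1
      exact hp0 (by simpa [hc'ne] using mul_eq_zero.mp h1 |>.resolve_right hc'ne)
  refine ⟨c, hcne, ?_⟩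
  rw [hg]
  simp

end Aux

private lemma zero_notMem_repDims {K F X : Type*} [Field K] [DivisionRing F] [Algebra K F]
    (φ : FreeAlgebra K X →ₐ[K] F) (g : F) (hg : g ≠ 0) : 0 ∉ repDims φ g := by
  rintro ⟨u, v, A, -, -, -, hval⟩
  apply hg
  rw [← hval, Matrix.mul_apply]
  simp

private lemma one_mem_repDims {K F X : Type*} [Field K] [DivisionRing F] [Algebra K F]
    (φ : FreeAlgebra K X →ₐ[K] F) (c : K) :
    1 ∈ repDims φ (algebraMap K F c) := by
  refine ⟨Matrix.of fun _ _ => c, Matrix.of fun _ _ => 1, 1, ?_, ?_, ?_, ?_⟩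
  · intro i j
    have : i = j := Subsingleton.elim i j
    subst this
    rw [Matrix.one_apply_eq]
    exact Submodule.subset_span (Or.inl rfl)
  · intro l hl T U h
    interval_cases l
    have := congr_fun₂ h 0 0
    rw [Matrix.one_apply_eq, Matrix.mul_apply] at this
    simp at this
  · rw [Matrix.map_one ⇑φ (map_zero φ) (map_one φ)]
    exact isUnit_one
  · rw [Matrix.map_one ⇑φ (map_zero φ) (map_one φ), Ring.inverse_one]
    simp [Matrix.mul_apply]

private lemma exists_of_one_mem_repDims {K F X : Type*} [Field K] [DivisionRing F] [Algebra K F]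
    (φ : FreeAlgebra K X →ₐ[K] F) (g : F) (h : 1 ∈ repDims φ g) :
    ∃ (u v : K) (a : FreeAlgebra K X) (b : F),
      a ∈ Submodule.span K ({1} ∪ Set.range (FreeAlgebra.ι K) : Set (FreeAlgebra K X)) ∧
      φ a * b = 1 ∧ b * φ a = 1 ∧
      algebraMap K F u * b * algebraMap K F v = g := by
  obtain ⟨u, v, A, hA, -, hunit, hval⟩ := h
  refine ⟨u 0 0, v 0 0, A 0 0, Ring.inverse (A.map ⇑φ) 0 0, hA 0 0, ?_, ?_, ?_⟩
  · have h2 : (A.map ⇑φ * Ring.inverse (A.map ⇑φ)) 0 0 = (1 : Matrix (Fin 1) (Fin 1) F) 0 0 := by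
      rw [Ring.mul_inverse_cancel _ hunit]
    rw [Matrix.mul_apply] at h2
    simpa [Matrix.one_apply_eq] using h2
  · have h2 : (Ring.inverse (A.map ⇑φ) * A.map ⇑φ) 0 0 = (1 : Matrix (Fin 1) (Fin 1) F) 0 0 := by
      rw [Ring.inverse_mul_cancel _ hunit]
    rw [Matrix.mul_apply] at h2
    simpa [Matrix.one_apply_eq] using h2
  · rw [← hval, Matrix.mul_apply]
    simp [Matrix.mul_apply]

private lemma freeRank_eq_one_of_scalar {K F X : Type*} [Field K] [DivisionRing F] [Algebra K F]
    (φ : FreeAlgebra K X →ₐ[K] F) (g : F) (hg : g ≠ 0) (c : K) (h : g = algebraMap K F c) :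
    freeRank φ g = 1 := by
  have m1 : 1 ∈ repDims φ g := h ▸ one_mem_repDims φ c
  have m0 : 0 ∉ repDims φ g := zero_notMem_repDims φ g hg
  have hle : sInf (repDims φ g) ≤ 1 := Nat.sInf_le m1
  have hmem : sInf (repDims φ g) ∈ repDims φ g := Nat.sInf_mem ⟨1, m1⟩
  have hne : sInf (repDims φ g) ≠ 0 := fun h0 => m0 (h0 ▸ hmem)
  unfold freeRank
  omega

/-- A nonzero element `f` of the free field lies in the ground field `K` if
and only if `rank f = rank f⁻¹ = 1`. -/
theorem mem_ground_field_iff_rank_one {K F X : Type*} [Field K] [DivisionRing F] [Algebra K F]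
    (φ : FreeAlgebra K X →ₐ[K] F) (hinj : Function.Injective φ)
    (hfullinv : ∀ (m : ℕ) (M : Matrix (Fin m) (Fin m) (FreeAlgebra K X)),
      (∀ l < m, ∀ (T : Matrix (Fin m) (Fin l) (FreeAlgebra K X))
        (U : Matrix (Fin l) (Fin m) (FreeAlgebra K X)), M ≠ T * U) →
      IsUnit (M.map ⇑φ))
    (f : F) (hf : f ≠ 0) :
    f ∈ Set.range ⇑(algebraMap K F) ↔ freeRank φ f = 1 ∧ freeRank φ f⁻¹ = 1 := by
  have hfinv : f⁻¹ ≠ 0 := inv_ne_zero hf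
  constructor
  · rintro ⟨c, rfl⟩
    refine ⟨freeRank_eq_one_of_scalar φ _ hf c rfl, ?_⟩
    exact freeRank_eq_one_of_scalar φ _ hfinv c⁻¹ (map_inv₀ (algebraMap K F) c).symm
  · rintro ⟨h1, h2⟩
    -- extract 1-dimensional representations
    have m1 : 1 ∈ repDims φ f := by
      have hne : (repDims φ f).Nonempty := by
        by_contra hne
        rw [Set.not_nonempty_iff_eq_empty] at hne
        rw [freeRank, hne, Nat.sInf_empty] at h1
        exact one_ne_zero h1.symm
      have : freeRank φ f ∈ repDims φ f := Nat.sInf_mem hne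
      rwa [h1] at this
    have m1' : 1 ∈ repDims φ f⁻¹ := by
      have hne : (repDims φ f⁻¹).Nonempty := by
        by_contra hne
        rw [Set.not_nonempty_iff_eq_empty] at hne
        rw [freeRank, hne, Nat.sInf_empty] at h2
        exact one_ne_zero h2.symm
      have : freeRank φ f⁻¹ ∈ repDims φ f⁻¹ := Nat.sInf_mem hne
      rwa [h2] at this
    obtain ⟨u, v, a, b, haspan, hab, hba, hval⟩ := exists_of_one_mem_repDims φ f m1
    obtain ⟨u', v', a', b', haspan', hab', hba', hval'⟩ := exists_of_one_mem_repDims φ f⁻¹ m1'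
    -- nonzero scalars
    have hu : u ≠ 0 := by rintro rfl; simp at hval; exact hf hval.symm
    have hv : v ≠ 0 := by rintro rfl; simp at hval; exact hf hval.symm
    have hu' : u' ≠ 0 := by rintro rfl; simp at hval'; exact hf hval'.symm
    have hv' : v' ≠ 0 := by rintro rfl; simp at hval'; exact hf hval'.symm
    -- φ a = e v * f⁻¹ * e u  and  φ a' = e v' * f * e u'
    have hb : b = (algebraMap K F u)⁻¹ * f * (algebraMap K F v)⁻¹ := by
      rw [← hval]
      rw [show (algebraMap K F u)⁻¹ * (algebraMap K F u * b * algebraMap K F v)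
            * (algebraMap K F v)⁻¹
          = ((algebraMap K F u)⁻¹ * algebraMap K F u) * b
            * (algebraMap K F v * (algebraMap K F v)⁻¹) from by noncomm_ring]
      rw [inv_mul_cancel₀ (by simpa using hu), mul_inv_cancel₀ (by simpa using hv),
        one_mul, mul_one]
    have hb' : b' = (algebraMap K F u')⁻¹ * f⁻¹ * (algebraMap K F v')⁻¹ := by
      rw [← hval']
      rw [show (algebraMap K F u')⁻¹ * (algebraMap K F u' * b' * algebraMap K F v')
            * (algebraMap K F v')⁻¹
          = ((algebraMap K F u')⁻¹ * algebraMap K F u') * b'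
            * (algebraMap K F v' * (algebraMap K F v')⁻¹) from by noncomm_ring]
      rw [inv_mul_cancel₀ (by simpa using hu'), mul_inv_cancel₀ (by simpa using hv'),
        one_mul, mul_one]
    have hpa : φ a = algebraMap K F v * f⁻¹ * algebraMap K F u := by
      have : φ a = b⁻¹ := eq_inv_of_mul_eq_one_left hab
      rw [this, hb, _root_.mul_inv_rev, _root_.mul_inv_rev, inv_inv, inv_inv, mul_assoc]
    have hpa' : φ a' = algebraMap K F v' * f * algebraMap K F u' := by
      have : φ a' = b'⁻¹ := eq_inv_of_mul_eq_one_left hab'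
      rw [this, hb', _root_.mul_inv_rev, _root_.mul_inv_rev, inv_inv, inv_inv, inv_inv, mul_assoc]
    -- scalar-shuffling helpers
    have scal : ∀ (p q : K) (x : F),
        algebraMap K F p * x * algebraMap K F q = x * algebraMap K F (p * q) := by
      intro p q x
      rw [Algebra.commutes, mul_assoc, ← _root_.map_mul]
    have scal2 : ∀ (k₁ k₂ : K) (x y : F),
        (x * algebraMap K F k₁) * (y * algebraMap K F k₂)
          = (x * y) * algebraMap K F (k₁ * k₂) := by
      intro k₁ k₂ x y
      rw [mul_assoc x, ← mul_assoc (algebraMap K F k₁) y, Algebra.commutes, _root_.map_mul]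
      noncomm_ring
    -- the product a' * a is a nonzero scalar
    have hprod : a' * a = algebraMap K (FreeAlgebra K X) (v' * u' * (v * u)) := by
      apply hinj
      rw [_root_.map_mul, AlgHom.commutes, hpa', hpa, scal, scal, scal2,
        mul_inv_cancel₀ hf, one_mul]
    have hkne : v' * u' * (v * u) ≠ 0 := by
      simp [hv', hu', hv, hu]
    obtain ⟨c', hc'ne, hc'⟩ := freefield_key_scalar a' a haspan' haspan _ hkne hprod
    -- hence f⁻¹, and so f, is a scalar
    have hfa' : algebraMap K F v' * f * algebraMap K F u' = algebraMap K F c' := by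
      rw [← hpa', hc', AlgHom.commutes]
    have hfval : f = algebraMap K F (v'⁻¹ * c' * u'⁻¹) := by
      rw [_root_.map_mul, _root_.map_mul, ← hfa']
      rw [show algebraMap K F v'⁻¹ * (algebraMap K F v' * f * algebraMap K F u')
            * algebraMap K F u'⁻¹
          = (algebraMap K F v'⁻¹ * algebraMap K F v') * f
            * (algebraMap K F u' * algebraMap K F u'⁻¹) from by noncomm_ring]
      rw [← _root_.map_mul, ← _root_.map_mul, inv_mul_cancel₀ hv', mul_inv_cancel₀ hu']
      simp
    exact ⟨v'⁻¹ * c' * u'⁻¹, hfval.symm⟩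
end
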